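/- Let W ≥ 1, b coprime to W, and R ≤ N^{1/(d 2^{d+5})} with 0 < ε₁ < ε₂ < 1 and ε₁ N > R. Define Λ_R(n) = Σ_{m | n, m ≤ R} μ(m) log(R/m) (μ the Möbius function) and ν(n) = (φ(W)/W) Λ_R(Wn+b)²/log R for ε₁N ≤ n ≤ ε₂N, ν(n) = 1 otherwise. Then for N sufficiently large and every n with ε₁N ≤ n ≤ ε₂N, ν(n) ≥ d^{-1} 2^{-d-6} Λ̄_b(n), where Λ̄_b(n) = (φ(W)/W) log(Wn+b) if Wn+b is prime and 0 otherwise. -/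

import Mathlib

open Finset ArithmeticFunction
open scoped ArithmeticFunction.Moebius

/-- with `R = N^{1/(d·2^{d+5})}`, `ε₁N > R` and
`Λ_R(n) = Σ_{m|n, m ≤ R} μ(m) log(R/m)`, for `N` sufficiently large and every
`n` with `ε₁N ≤ n ≤ ε₂N`, the Green–Tao measure value
`ν(n) = (φ(W)/W)·Λ_R(Wn+b)²/log R` satisfies `ν(n) ≥ d⁻¹2^{-d-6} Λ̄_b(n)`,
where `Λ̄_b(n) = (φ(W)/W)·log(Wn+b)` if `Wn+b` is prime and `0` otherwise. -/
theorem greentao_measure_dominates (d W b : ℕ) (hd : 0 < d) (hW : 1 ≤ W)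
    (hb : Nat.Coprime b W) (ε₁ ε₂ : ℝ) (h1 : 0 < ε₁) (h12 : ε₁ < ε₂)
    (h2 : ε₂ < 1) :
    ∃ N₀ : ℕ, ∀ N : ℕ, N₀ ≤ N → ∀ R : ℝ,
    R = (N : ℝ) ^ ((1 : ℝ) / (d * 2 ^ (d + 5))) →
    R < ε₁ * N →
    ∀ n : ℕ, ε₁ * N ≤ (n : ℝ) → (n : ℝ) ≤ ε₂ * N →
    ((Nat.totient W : ℝ) / W) *
        (∑ m ∈ (W * n + b).divisors.filter (fun m : ℕ => (m : ℝ) ≤ R),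
            (μ m : ℝ) * Real.log (R / m)) ^ 2 / Real.log R
    ≥ ((1 : ℝ) / (d * 2 ^ (d + 6))) *
        (if (W * n + b).Prime then
          ((Nat.totient W : ℝ) / W) * Real.log (W * n + b) else 0) := by
  use W + b + 2
  intro N hN R hR hRN n hn1 hn2
  have hN2 : (2:ℝ) ≤ (N:ℝ) := by exact_mod_cast le_trans (by omega : 2 ≤ W + b + 2) hN
  have hN0 : (0:ℝ) < (N:ℝ) := by linarith
  have hD : (0:ℝ) < (d:ℝ) * 2 ^ (d+5) := by positivity
  have hR1 : 1 < R := by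
    rw [hR]
    exact (Real.one_lt_rpow_iff_of_pos hN0).2 (Or.inl ⟨by linarith, by positivity⟩)
  have hlogR : 0 < Real.log R := Real.log_pos hR1
  by_cases hp : (W * n + b).Prime
  · have hW1 : (1:ℝ) ≤ (W:ℝ) := by exact_mod_cast hW
    have hnWnb : (n:ℝ) ≤ ((W * n + b : ℕ) : ℝ) := by
      have : n ≤ W * n + b := le_trans (Nat.le_mul_of_pos_left n (by omega)) (Nat.le_add_right _ _)
      exact_mod_cast this
    have hnR : R < ((W * n + b : ℕ) : ℝ) := by
      have := lt_of_lt_of_le hRN hn1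
      linarith
    have hfilter : (W * n + b).divisors.filter (fun m : ℕ => (m : ℝ) ≤ R) = {1} := by
      rw [hp.divisors]
      ext m
      simp only [Finset.mem_filter, Finset.mem_insert, Finset.mem_singleton]
      constructor
      · rintro ⟨h1 | h1, h2⟩
        · exact h1
        · exfalso; rw [h1] at h2; exact absurd h2 (not_le.2 hnR)
      · rintro rfl
        exact ⟨Or.inl rfl, by push_cast; linarith⟩
    rw [hfilter, if_pos hp]
    simp only [Finset.sum_singleton, Nat.cast_one, ArithmeticFunction.moebius_apply_one,
      Int.cast_one, one_mul, div_one]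
    rw [sq, mul_div_assoc, mul_div_assoc, div_self (ne_of_gt hlogR), mul_one]
    have hc : (0:ℝ) ≤ (Nat.totient W : ℝ) / W := by positivity
    have hlogN : (0:ℝ) ≤ Real.log N := Real.log_nonneg (by linarith)
    have hlogRval : Real.log R = (1 / ((d:ℝ) * 2 ^ (d+5))) * Real.log N := by
      rw [hR, Real.log_rpow hN0]
    have hbound : ((W:ℝ) * n + b) ≤ (N:ℝ) * N := by
      have hWbN : (W:ℝ) + b ≤ N := by exact_mod_cast le_trans (by omega : W + b ≤ W + b + 2) hN
      have hnN : (n:ℝ) ≤ N := by nlinarith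
      nlinarith [(Nat.cast_nonneg b : (0:ℝ) ≤ (b:ℝ)), (Nat.cast_nonneg W : (0:ℝ) ≤ (W:ℝ)), (Nat.cast_nonneg n : (0:ℝ) ≤ (n:ℝ))]
    have hlogWnb : Real.log ((W:ℝ) * n + b) ≤ 2 * Real.log N := by
      have h0 : (0:ℝ) < (W:ℝ) * n + b := by
        have := hp.pos; push_cast; exact_mod_cast (by exact_mod_cast this : (0:ℝ) < ((W*n+b:ℕ):ℝ))
      calc Real.log ((W:ℝ) * n + b) ≤ Real.log ((N:ℝ) * N) := Real.log_le_log h0 hbound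
        _ = 2 * Real.log N := by rw [Real.log_mul (ne_of_gt hN0) (ne_of_gt hN0)]; ring
    have key : (1 / ((d:ℝ) * 2 ^ (d+6))) * Real.log ((W:ℝ) * n + b) ≤ Real.log R := by
      rw [hlogRval]
      have h26 : (2:ℝ) ^ (d+6) = 2 * 2 ^ (d+5) := by ring
      rw [h26]
      rw [div_mul_eq_mul_div, div_mul_eq_mul_div, one_mul, one_mul, div_le_div_iff₀ (by positivity) hD]
      have hd1 : (1:ℝ) ≤ (d:ℝ) := by exact_mod_cast hd
      nlinarith [hlogWnb, hlogN, pow_pos (by norm_num : (0:ℝ) < 2) (d+5)]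
    push_cast
    calc (1 / ((d:ℝ) * 2 ^ (d+6))) * ((Nat.totient W : ℝ) / W * Real.log ((W:ℝ) * n + b))
        = (Nat.totient W : ℝ) / W * ((1 / ((d:ℝ) * 2 ^ (d+6))) * Real.log ((W:ℝ) * n + b)) := by ring
      _ ≤ (Nat.totient W : ℝ) / W * Real.log R := mul_le_mul_of_nonneg_left key hc
  · rw [if_neg hp, mul_zero]
    apply div_nonneg _ hlogR.le
    positivity
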